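/- Let a > 0, c > 0 and ρ > 0 be real numbers and set L = (4πρ/15)·a²c·(a² − c²). Then the two conditions L < 0 and 1 + (32πρ/15)·(c a⁴)/L < 0 hold simultaneously if and only if a < c < 3a. Equivalently, the eigenvalues λ₂^± = −1/2 ± (1/2)√(1 + (32πρ/15)(c a⁴)/L) of Sobolev's reduced top are non-real precisely when a < c < 3a, reproducing Greenhill's instability zone. -/
import Mathlib


open Real

/-- Greenhill's instability zone via Sobolev's reduced top: for `a, c, ρ > 0` and
`L = (4πρ/15)a²c(a² − c²)`, the conditions `L < 0` and
`1 + (32πρ/15)·(c a⁴)/L < 0` (i.e. the eigenvalues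
`λ₂^± = −1/2 ± (1/2)√(1 + (32πρ/15)(c a⁴)/L)` are non-real) hold simultaneously
iff `a < c < 3a`. -/
theorem greenhill_instability_zone (a c ρ : ℝ) (ha : 0 < a) (hc : 0 < c) (hρ : 0 < ρ) :
    ((4 * π * ρ / 15) * a ^ 2 * c * (a ^ 2 - c ^ 2) < 0 ∧
      1 + (32 * π * ρ / 15) * (c * a ^ 4) / ((4 * π * ρ / 15) * a ^ 2 * c * (a ^ 2 - c ^ 2))
        < 0) ↔
    (a < c ∧ c < 3 * a) := by
  have hπ := pi_pos
  have hk : (0:ℝ) < 4 * π * ρ / 15 * a ^ 2 * c := by positivity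
  have key : (32 * π * ρ / 15) * (c * a ^ 4) / ((4 * π * ρ / 15) * a ^ 2 * c * (a ^ 2 - c ^ 2))
      = 8 * a ^ 2 / (a ^ 2 - c ^ 2) := by
    rcases eq_or_ne (a ^ 2 - c ^ 2) 0 with h | h
    · simp [h]
    · field_simp
      ring
  rw [key]
  have hL : (4 * π * ρ / 15) * a ^ 2 * c * (a ^ 2 - c ^ 2) < 0 ↔ a ^ 2 - c ^ 2 < 0 := by
    constructor
    · intro h
      nlinarith
    · intro h
      exact mul_neg_of_pos_of_neg hk h
  rw [hL]
  constructor
  · rintro ⟨hd, hfrac⟩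
    have hac : a < c := by nlinarith
    refine ⟨hac, ?_⟩
    have h8 : 8 * a ^ 2 / (a ^ 2 - c ^ 2) < -1 := by linarith
    rw [div_lt_iff_of_neg hd] at h8
    nlinarith
  · rintro ⟨h1, h2⟩
    have hd : a ^ 2 - c ^ 2 < 0 := by nlinarith
    refine ⟨hd, ?_⟩
    have h8 : 8 * a ^ 2 / (a ^ 2 - c ^ 2) < -1 := by
      rw [div_lt_iff_of_neg hd]
      nlinarith
    linarith
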